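/- (Equation (40) of the paper: concave lower bound on the noise-fraction trace for the common message.) Fix the channels H_{lk,i} (so H̄_{lk,i} = H_{lk,i}) and fix reference precoders {W̄} = {W̄_i, W̄_{ij}}, and assume σ² > 0. Then for the pair (l,k) considered and for every choice of precoders {W} = {W_i, W_{ij}}: Tr(D_{c,lk}(S_{c,lk} + D_{c,lk})^{-1}) ≥ 2 Σ_{i=1}^{L} Σ_{j=1}^{K} Re Tr((S̄_{c,lk} + D̄_{c,lk})^{-1} H_{lk,i} W̄_{ij} W_{ij}^H H_{lk,i}^H) + 2 Σ_{i ≠ l} Re Tr((S̄_{c,lk} + D̄_{c,lk})^{-1} H_{lk,i} W̄_{i} W_{i}^H H_{lk,i}^H) − Re Tr((S̄_{c,lk} + D̄_{c,lk})^{-1} D̄_{c,lk} (S̄_{c,lk} + D̄_{c,lk})^{-1} (S_{c,lk} + D_{c,lk})), where barred quantities are evaluated at {W̄} and unbarred quantities at {W}, and the left-hand side is a real number. -/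

import Mathlib

open Matrix Finset
open scoped ComplexOrder

noncomputable section RSMA

variable {L K Nu NBS : ℕ}

/-- Transmit covariance `C_i = W_iW_iᴴ + Σ_j W_{ij}W_{ij}ᴴ` of base station `i`. -/
def Cmat (Wc : Fin L → Matrix (Fin NBS) (Fin NBS) ℂ)
    (Wp : Fin L → Fin K → Matrix (Fin NBS) (Fin NBS) ℂ) (i : Fin L) :
    Matrix (Fin NBS) (Fin NBS) ℂ :=
  Wc i * (Wc i)ᴴ + ∑ j : Fin K, Wp i j * (Wp i j)ᴴ

/-- Private-signal covariance `S_{lk} = H_{lk,l}W_{lk}(H_{lk,l}W_{lk})ᴴ`. -/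
def Smat (H : Fin L → Fin K → Fin L → Matrix (Fin Nu) (Fin NBS) ℂ)
    (Wp : Fin L → Fin K → Matrix (Fin NBS) (Fin NBS) ℂ)
    (l : Fin L) (k : Fin K) : Matrix (Fin Nu) (Fin Nu) ℂ :=
  (H l k l * Wp l k) * (H l k l * Wp l k)ᴴ

/-- Common-signal covariance `S_{c,lk} = H_{lk,l}W_{l}(H_{lk,l}W_{l})ᴴ`. -/
def Scmat (H : Fin L → Fin K → Fin L → Matrix (Fin Nu) (Fin NBS) ℂ)
    (Wc : Fin L → Matrix (Fin NBS) (Fin NBS) ℂ)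
    (l : Fin L) (k : Fin K) : Matrix (Fin Nu) (Fin Nu) ℂ :=
  (H l k l * Wc l) * (H l k l * Wc l)ᴴ

/-- Interference-plus-noise covariance
`D_{lk} = σ²I + Σ_{j≠k} H_{lk,l}W_{lj}(H_{lk,l}W_{lj})ᴴ + Σ_{i≠l} H_{lk,i}C_iH_{lk,i}ᴴ`. -/
def Dmat (σ2 : ℝ) (H : Fin L → Fin K → Fin L → Matrix (Fin Nu) (Fin NBS) ℂ)
    (Wc : Fin L → Matrix (Fin NBS) (Fin NBS) ℂ)
    (Wp : Fin L → Fin K → Matrix (Fin NBS) (Fin NBS) ℂ)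
    (l : Fin L) (k : Fin K) : Matrix (Fin Nu) (Fin Nu) ℂ :=
  (σ2 : ℂ) • (1 : Matrix (Fin Nu) (Fin Nu) ℂ)
    + ∑ j ∈ Finset.univ.erase k, (H l k l * Wp l j) * (H l k l * Wp l j)ᴴ
    + ∑ i ∈ Finset.univ.erase l, H l k i * Cmat Wc Wp i * (H l k i)ᴴ

/-- `D_{c,lk} = D_{lk} + S_{lk}`. -/
def Dcmat (σ2 : ℝ) (H : Fin L → Fin K → Fin L → Matrix (Fin Nu) (Fin NBS) ℂ)
    (Wc : Fin L → Matrix (Fin NBS) (Fin NBS) ℂ)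
    (Wp : Fin L → Fin K → Matrix (Fin NBS) (Fin NBS) ℂ)
    (l : Fin L) (k : Fin K) : Matrix (Fin Nu) (Fin Nu) ℂ :=
  Dmat σ2 H Wc Wp l k + Smat H Wp l k

/-- Channel dispersion of the private message: `ζ'_{lk} = 2 Tr(S_{lk} D_{c,lk}⁻¹)`. -/
def zetaP (σ2 : ℝ) (H : Fin L → Fin K → Fin L → Matrix (Fin Nu) (Fin NBS) ℂ)
    (Wc : Fin L → Matrix (Fin NBS) (Fin NBS) ℂ)
    (Wp : Fin L → Fin K → Matrix (Fin NBS) (Fin NBS) ℂ)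
    (l : Fin L) (k : Fin K) : ℝ :=
  2 * ((Smat H Wp l k * (Dcmat σ2 H Wc Wp l k)⁻¹).trace).re

/-- Channel dispersion of the common message:
`ζ_{c,lk} = 2 Tr(S_{c,lk}(S_{c,lk} + D_{c,lk})⁻¹)`. -/
def zetaC (σ2 : ℝ) (H : Fin L → Fin K → Fin L → Matrix (Fin Nu) (Fin NBS) ℂ)
    (Wc : Fin L → Matrix (Fin NBS) (Fin NBS) ℂ)
    (Wp : Fin L → Fin K → Matrix (Fin NBS) (Fin NBS) ℂ)
    (l : Fin L) (k : Fin K) : ℝ :=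
  2 * ((Scmat H Wc l k * (Scmat H Wc l k + Dcmat σ2 H Wc Wp l k)⁻¹).trace).re

/-- Finite-blocklength private rate
`r_{p,lk} = log det(I + D_{lk}⁻¹S_{lk}) − q_p √(2Tr(S_{lk}D_{c,lk}⁻¹)/n)`. -/
def rpRate (σ2 nn qp : ℝ) (H : Fin L → Fin K → Fin L → Matrix (Fin Nu) (Fin NBS) ℂ)
    (Wc : Fin L → Matrix (Fin NBS) (Fin NBS) ℂ)
    (Wp : Fin L → Fin K → Matrix (Fin NBS) (Fin NBS) ℂ)
    (l : Fin L) (k : Fin K) : ℝ :=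
  Real.log ((1 + (Dmat σ2 H Wc Wp l k)⁻¹ * Smat H Wp l k).det.re)
    - qp * Real.sqrt (zetaP σ2 H Wc Wp l k / nn)

/-- Finite-blocklength common rate
`r_{c,lk} = log det(I + D_{c,lk}⁻¹S_{c,lk}) − q_c √(2Tr(S_{c,lk}(S_{c,lk}+D_{c,lk})⁻¹)/n)`. -/
def rcRate (σ2 nn qc : ℝ) (H : Fin L → Fin K → Fin L → Matrix (Fin Nu) (Fin NBS) ℂ)
    (Wc : Fin L → Matrix (Fin NBS) (Fin NBS) ℂ)
    (Wp : Fin L → Fin K → Matrix (Fin NBS) (Fin NBS) ℂ)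
    (l : Fin L) (k : Fin K) : ℝ :=
  Real.log ((1 + (Dcmat σ2 H Wc Wp l k)⁻¹ * Scmat H Wc l k).det.re)
    - qc * Real.sqrt (zetaC σ2 H Wc Wp l k / nn)



section Helpers

variable {n m : Type*} [Fintype n] [Fintype m] [DecidableEq n] [DecidableEq m]

omit [DecidableEq n] in
lemma re_trace_nonneg' {M : Matrix n n ℂ} (hM : M.PosSemidef) : 0 ≤ (M.trace).re := by
  classical
  have h : (0:ℂ) ≤ M.trace := by
    rw [Matrix.trace]
    apply Finset.sum_nonneg
    intro i _
    exact hM.diag_nonneg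
  exact (Complex.le_def.mp h).1

omit [DecidableEq n] in
lemma posSemidef_sum' {ι : Type*} (s : Finset ι) (f : ι → Matrix n n ℂ)
    (h : ∀ i ∈ s, (f i).PosSemidef) : (∑ i ∈ s, f i).PosSemidef :=
  Finset.sum_induction f _ (fun _ _ ha hb => ha.add hb) (Matrix.PosSemidef.zero) h

lemma key_ineq' (T R S : Matrix n n ℂ) (hT : T.PosSemidef)
    (hR : R.IsHermitian) (hS : S.IsHermitian)
    (hST : S * T = 1) (hTS : T * S = 1)
    (V Vb : Matrix n m ℂ) :
    2 * ((R * Vb * Vᴴ).trace).re ≤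
      ((V * Vᴴ * S).trace).re + ((R * Vb * Vbᴴ * R * T).trace).re := by
  set M := S * V - R * Vb with hM
  have h0 : 0 ≤ ((Mᴴ * T * M).trace).re :=
    re_trace_nonneg' (hT.conjTranspose_mul_mul_same M)
  have f1 : ∀ (X : Matrix n m ℂ), S * (T * X) = X := fun X => by
    rw [← Matrix.mul_assoc, hST, Matrix.one_mul]
  have f2 : ∀ (X : Matrix n m ℂ), T * (S * X) = X := fun X => by
    rw [← Matrix.mul_assoc, hTS, Matrix.one_mul]
  have hMT : Mᴴ = Vᴴ * S - Vbᴴ * R := by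
    simp [hM, conjTranspose_sub, conjTranspose_mul, hR.eq, hS.eq]
  have expand : Mᴴ * T * M
      = Vᴴ * (S * V) - Vᴴ * (R * Vb) - Vbᴴ * (R * V) + Vbᴴ * (R * (T * (R * Vb))) := by
    rw [hMT, hM]
    simp only [Matrix.sub_mul, Matrix.mul_sub]
    simp only [Matrix.mul_assoc]
    simp only [f1, f2]
    abel
  have htr : ((Mᴴ * T * M).trace).re
      = ((Vᴴ * (S * V)).trace).re - ((Vᴴ * (R * Vb)).trace).re
        - ((Vbᴴ * (R * V)).trace).re + ((Vbᴴ * (R * (T * (R * Vb)))).trace).re := by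
    rw [expand, Matrix.trace_add, Matrix.trace_sub, Matrix.trace_sub]
    simp [Complex.add_re, Complex.sub_re]
  have hcross : ((Vbᴴ * (R * V)).trace).re = ((Vᴴ * (R * Vb)).trace).re := by
    have h1 : (Vᴴ * (R * Vb))ᴴ = Vbᴴ * (R * V) := by
      simp [conjTranspose_mul, hR.eq, Matrix.mul_assoc]
    rw [← h1, Matrix.trace_conjTranspose]
    simp
  have e1 : ((Vᴴ * (S * V)).trace) = ((V * Vᴴ * S).trace) := by
    rw [Matrix.trace_mul_comm, Matrix.mul_assoc, Matrix.trace_mul_comm S, Matrix.mul_assoc]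
  have e2 : ((Vᴴ * (R * Vb)).trace) = ((R * Vb * Vᴴ).trace) := by
    rw [Matrix.trace_mul_comm]
  have e3 : ((Vbᴴ * (R * (T * (R * Vb)))).trace) = ((R * Vb * Vbᴴ * R * T).trace) := by
    rw [Matrix.trace_mul_comm]
    rw [show R * (T * (R * Vb)) * Vbᴴ = (R * T) * (R * Vb * Vbᴴ) by
      simp [Matrix.mul_assoc]]
    rw [Matrix.trace_mul_comm]
    simp [Matrix.mul_assoc]
  rw [htr, hcross, e1, e2, e3] at h0
  linarith

lemma main_core' {ιA ιB : Type*} (sA : Finset ιA) (sB : Finset ιB)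
    (σ2 : ℝ) (hσ : 0 < σ2)
    (VA VAb : ιA → Matrix n m ℂ) (VB VBb : ιB → Matrix n m ℂ)
    (E Eb : Matrix n n ℂ) (hE : E.PosSemidef) (hEb : Eb.PosSemidef) :
    ((((σ2:ℂ) • (1 : Matrix n n ℂ) + ∑ a ∈ sA, VA a * (VA a)ᴴ + ∑ b ∈ sB, VB b * (VB b)ᴴ) *
        (E + ((σ2:ℂ) • 1 + ∑ a ∈ sA, VA a * (VA a)ᴴ + ∑ b ∈ sB, VB b * (VB b)ᴴ))⁻¹).trace).re ≥
      2 * ∑ a ∈ sA, (((Eb + ((σ2:ℂ) • 1 + ∑ a ∈ sA, VAb a * (VAb a)ᴴ + ∑ b ∈ sB, VBb b * (VBb b)ᴴ))⁻¹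
            * VAb a * (VA a)ᴴ).trace).re
      + 2 * ∑ b ∈ sB, (((Eb + ((σ2:ℂ) • 1 + ∑ a ∈ sA, VAb a * (VAb a)ᴴ + ∑ b ∈ sB, VBb b * (VBb b)ᴴ))⁻¹
            * VBb b * (VB b)ᴴ).trace).re
      - (((Eb + ((σ2:ℂ) • 1 + ∑ a ∈ sA, VAb a * (VAb a)ᴴ + ∑ b ∈ sB, VBb b * (VBb b)ᴴ))⁻¹
            * ((σ2:ℂ) • 1 + ∑ a ∈ sA, VAb a * (VAb a)ᴴ + ∑ b ∈ sB, VBb b * (VBb b)ᴴ)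
            * (Eb + ((σ2:ℂ) • 1 + ∑ a ∈ sA, VAb a * (VAb a)ᴴ + ∑ b ∈ sB, VBb b * (VBb b)ᴴ))⁻¹
            * (E + ((σ2:ℂ) • 1 + ∑ a ∈ sA, VA a * (VA a)ᴴ + ∑ b ∈ sB, VB b * (VB b)ᴴ))).trace).re := by
  set D : Matrix n n ℂ := (σ2:ℂ) • 1 + ∑ a ∈ sA, VA a * (VA a)ᴴ + ∑ b ∈ sB, VB b * (VB b)ᴴ with hD
  set Db : Matrix n n ℂ := (σ2:ℂ) • 1 + ∑ a ∈ sA, VAb a * (VAb a)ᴴ + ∑ b ∈ sB, VBb b * (VBb b)ᴴ with hDb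
  set T : Matrix n n ℂ := E + D with hTdef
  set Tb : Matrix n n ℂ := Eb + Db with hTbdef
  have hone : ((σ2:ℂ) • (1 : Matrix n n ℂ)).PosDef := by
    rw [Matrix.smul_one_eq_diagonal]
    exact Matrix.PosDef.diagonal fun _ => Complex.zero_lt_real.mpr hσ
  have hDpd : D.PosDef :=
    (hone.add_posSemidef (posSemidef_sum' _ _ fun a _ =>
        Matrix.posSemidef_self_mul_conjTranspose _)).add_posSemidef
      (posSemidef_sum' _ _ fun b _ => Matrix.posSemidef_self_mul_conjTranspose _)
  have hDbpd : Db.PosDef :=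
    (hone.add_posSemidef (posSemidef_sum' _ _ fun a _ =>
        Matrix.posSemidef_self_mul_conjTranspose _)).add_posSemidef
      (posSemidef_sum' _ _ fun b _ => Matrix.posSemidef_self_mul_conjTranspose _)
  have hT : T.PosDef := Matrix.PosDef.posSemidef_add hE hDpd
  have hTb : Tb.PosDef := Matrix.PosDef.posSemidef_add hEb hDbpd
  have hTdet : IsUnit T.det := (Matrix.isUnit_iff_isUnit_det T).mp hT.isUnit
  have hST : T⁻¹ * T = 1 := Matrix.nonsing_inv_mul T hTdet
  have hTS : T * T⁻¹ = 1 := Matrix.mul_nonsing_inv T hTdet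
  have hSh : (T⁻¹).IsHermitian := hT.isHermitian.inv
  have hRh : (Tb⁻¹).IsHermitian := hTb.isHermitian.inv
  have hL : ((D * T⁻¹).trace).re
      = σ2 * ((T⁻¹).trace).re + (∑ a ∈ sA, ((VA a * (VA a)ᴴ * T⁻¹).trace).re)
        + ∑ b ∈ sB, ((VB b * (VB b)ᴴ * T⁻¹).trace).re := by
    rw [hD]
    simp [Matrix.add_mul, Matrix.sum_mul, Matrix.trace_add, Matrix.trace_sum,
      Complex.add_re, Complex.re_sum, smul_mul_assoc, Matrix.trace_smul,
      smul_eq_mul, Complex.re_ofReal_mul, Matrix.one_mul]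
  have hc : ((Tb⁻¹ * Db * Tb⁻¹ * T).trace).re
      = σ2 * ((Tb⁻¹ * Tb⁻¹ * T).trace).re
        + (∑ a ∈ sA, ((Tb⁻¹ * VAb a * (VAb a)ᴴ * Tb⁻¹ * T).trace).re)
        + ∑ b ∈ sB, ((Tb⁻¹ * VBb b * (VBb b)ᴴ * Tb⁻¹ * T).trace).re := by
    rw [hDb]
    simp [Matrix.mul_add, Matrix.add_mul, Matrix.mul_sum, Matrix.sum_mul, Matrix.trace_add,
      Matrix.trace_sum, Complex.add_re, Complex.re_sum, mul_smul_comm, smul_mul_assoc,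
      Matrix.trace_smul, smul_eq_mul, Complex.re_ofReal_mul, Matrix.mul_one, Matrix.mul_assoc]
  rw [hL, hc]
  have hσ0 : 0 ≤ σ2 * ((T⁻¹).trace).re :=
    mul_nonneg hσ.le (re_trace_nonneg' hT.inv.posSemidef)
  have hσ1 : 0 ≤ σ2 * ((Tb⁻¹ * Tb⁻¹ * T).trace).re := by
    apply mul_nonneg hσ.le
    have h1 : ((Tb⁻¹)ᴴ * T * Tb⁻¹).PosSemidef := hT.posSemidef.conjTranspose_mul_mul_same _
    rw [hRh.eq] at h1
    have h2 : (Tb⁻¹ * Tb⁻¹ * T).trace = (Tb⁻¹ * T * Tb⁻¹).trace := by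
      rw [Matrix.mul_assoc, Matrix.trace_mul_comm, Matrix.mul_assoc]
    rw [h2]
    exact re_trace_nonneg' h1
  have HA : 2 * (∑ a ∈ sA, ((Tb⁻¹ * VAb a * (VA a)ᴴ).trace).re)
      ≤ (∑ a ∈ sA, ((VA a * (VA a)ᴴ * T⁻¹).trace).re)
        + ∑ a ∈ sA, ((Tb⁻¹ * VAb a * (VAb a)ᴴ * Tb⁻¹ * T).trace).re := by
    rw [Finset.mul_sum, ← Finset.sum_add_distrib]
    exact Finset.sum_le_sum fun a _ =>
      key_ineq' T Tb⁻¹ T⁻¹ hT.posSemidef hRh hSh hST hTS (VA a) (VAb a)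
  have HB : 2 * (∑ b ∈ sB, ((Tb⁻¹ * VBb b * (VB b)ᴴ).trace).re)
      ≤ (∑ b ∈ sB, ((VB b * (VB b)ᴴ * T⁻¹).trace).re)
        + ∑ b ∈ sB, ((Tb⁻¹ * VBb b * (VBb b)ᴴ * Tb⁻¹ * T).trace).re := by
    rw [Finset.mul_sum, ← Finset.sum_add_distrib]
    exact Finset.sum_le_sum fun b _ =>
      key_ineq' T Tb⁻¹ T⁻¹ hT.posSemidef hRh hSh hST hTS (VB b) (VBb b)
  linarith

end Helpers

lemma Dcmat_decomp (σ2 : ℝ) (H : Fin L → Fin K → Fin L → Matrix (Fin Nu) (Fin NBS) ℂ)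
    (Wc : Fin L → Matrix (Fin NBS) (Fin NBS) ℂ)
    (Wp : Fin L → Fin K → Matrix (Fin NBS) (Fin NBS) ℂ)
    (l : Fin L) (k : Fin K) :
    Dcmat σ2 H Wc Wp l k
      = (σ2 : ℂ) • (1 : Matrix (Fin Nu) (Fin Nu) ℂ)
        + (∑ p : Fin L × Fin K, (H l k p.1 * Wp p.1 p.2) * (H l k p.1 * Wp p.1 p.2)ᴴ)
        + ∑ i ∈ Finset.univ.erase l, (H l k i * Wc i) * (H l k i * Wc i)ᴴ := by
  have hC : ∀ i : Fin L, H l k i * Cmat Wc Wp i * (H l k i)ᴴ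
      = (H l k i * Wc i) * (H l k i * Wc i)ᴴ
        + ∑ j : Fin K, (H l k i * Wp i j) * (H l k i * Wp i j)ᴴ := by
    intro i
    rw [Cmat, Matrix.mul_add, Matrix.add_mul, Matrix.mul_sum, Matrix.sum_mul]
    simp [Matrix.conjTranspose_mul, Matrix.mul_assoc]
  rw [Dcmat, Dmat, Smat, Fintype.sum_prod_type]
  simp only [hC, Finset.sum_add_distrib]
  rw [← Finset.add_sum_erase (Finset.univ) _ (Finset.mem_univ l)]
  rw [← Finset.add_sum_erase (Finset.univ) _ (Finset.mem_univ k)]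
  abel


/-- **Equation (40) of the paper.** Concave lower bound on the noise-fraction trace for
the common message: with the channels fixed (so `H̄ = H`) and reference precoders
`{W̄} = (Wcb, Wpb)`, assuming `σ² > 0`, for every choice of precoders `{W} = (Wc, Wp)`:
`Tr(D_{c,lk}(S_{c,lk} + D_{c,lk})⁻¹)
  ≥ 2 Σ_{ij} Re Tr((S̄_{c,lk}+D̄_{c,lk})⁻¹ H_{lk,i} W̄_{ij} W_{ij}ᴴ H_{lk,i}ᴴ)
  + 2 Σ_{i≠l} Re Tr((S̄_{c,lk}+D̄_{c,lk})⁻¹ H_{lk,i} W̄_{i} W_{i}ᴴ H_{lk,i}ᴴ)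
  − Re Tr((S̄_{c,lk}+D̄_{c,lk})⁻¹ D̄_{c,lk} (S̄_{c,lk}+D̄_{c,lk})⁻¹ (S_{c,lk}+D_{c,lk}))`. -/
theorem noise_fraction_trace_lower_bound {L K Nu NBS : ℕ}
    (σ2 : ℝ) (hσ : 0 < σ2)
    (H : Fin L → Fin K → Fin L → Matrix (Fin Nu) (Fin NBS) ℂ)
    (Wcb : Fin L → Matrix (Fin NBS) (Fin NBS) ℂ)
    (Wpb : Fin L → Fin K → Matrix (Fin NBS) (Fin NBS) ℂ)
    (l : Fin L) (k : Fin K)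
    (Wc : Fin L → Matrix (Fin NBS) (Fin NBS) ℂ)
    (Wp : Fin L → Fin K → Matrix (Fin NBS) (Fin NBS) ℂ) :
    ((Dcmat σ2 H Wc Wp l k *
        (Scmat H Wc l k + Dcmat σ2 H Wc Wp l k)⁻¹).trace).re ≥
      2 * ∑ i : Fin L, ∑ j : Fin K,
          (((Scmat H Wcb l k + Dcmat σ2 H Wcb Wpb l k)⁻¹ *
              H l k i * Wpb i j * (Wp i j)ᴴ * (H l k i)ᴴ).trace).re
        + 2 * ∑ i ∈ Finset.univ.erase l,
            (((Scmat H Wcb l k + Dcmat σ2 H Wcb Wpb l k)⁻¹ *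
                H l k i * Wcb i * (Wc i)ᴴ * (H l k i)ᴴ).trace).re
        - (((Scmat H Wcb l k + Dcmat σ2 H Wcb Wpb l k)⁻¹ *
              Dcmat σ2 H Wcb Wpb l k *
              (Scmat H Wcb l k + Dcmat σ2 H Wcb Wpb l k)⁻¹ *
              (Scmat H Wc l k + Dcmat σ2 H Wc Wp l k)).trace).re := by
  have hE : (Scmat H Wc l k).PosSemidef := by
    rw [Scmat]; exact Matrix.posSemidef_self_mul_conjTranspose _
  have hEb : (Scmat H Wcb l k).PosSemidef := by
    rw [Scmat]; exact Matrix.posSemidef_self_mul_conjTranspose _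
  have main := main_core' (Finset.univ : Finset (Fin L × Fin K)) (Finset.univ.erase l) σ2 hσ
    (fun p => H l k p.1 * Wp p.1 p.2) (fun p => H l k p.1 * Wpb p.1 p.2)
    (fun i => H l k i * Wc i) (fun i => H l k i * Wcb i)
    (Scmat H Wc l k) (Scmat H Wcb l k) hE hEb
  rw [Dcmat_decomp σ2 H Wc Wp l k, Dcmat_decomp σ2 H Wcb Wpb l k]
  simp only [Fintype.sum_prod_type, Matrix.conjTranspose_mul, Matrix.mul_assoc] at main ⊢
  exact main


end RSMA
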